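/- For a positive definite Hermitian matrix M of size n, ln(det(M⁻¹)) equals the maximum over all positive semidefinite Hermitian matrices S of the function f(S) = -tr(S·M) + ln(det S) + n, and the maximum is attained uniquely at S = M⁻¹. -/

import Mathlib

open ComplexOrder

namespace LogDetAuxC

open Matrix

variable {n : ℕ}

lemma trace_eq_sum_eigs (A : Matrix (Fin n) (Fin n) ℂ) (hA : A.IsHermitian) :
    A.trace = ∑ i, (hA.eigenvalues i : ℂ) := by
  conv_lhs => rw [hA.spectral_theorem]
  rw [Unitary.conjStarAlgAut_apply]
  rw [trace_mul_cycle, (Matrix.mem_unitaryGroup_iff').mp (hA.eigenvectorUnitary).2,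
    one_mul, trace_diagonal]
  rfl

lemma det_re_eq_prod (A : Matrix (Fin n) (Fin n) ℂ) (hA : A.IsHermitian) :
    A.det.re = ∏ i, hA.eigenvalues i := by
  rw [hA.det_eq_prod_eigenvalues,
    ← RCLike.ofReal_prod]
  exact Complex.ofReal_re _

/-- key scalar inequality -/
lemma key (A : Matrix (Fin n) (Fin n) ℂ) (hA : A.PosDef) :
    Real.log A.det.re + n ≤ A.trace.re ∧
      (Real.log A.det.re + n = A.trace.re → A = 1) := by
  have hev := hA.eigenvalues_pos
  have htr : A.trace.re = ∑ i, hA.1.eigenvalues i := by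
    rw [trace_eq_sum_eigs A hA.1]
    rw [Complex.re_sum]
    simp
  have hld : Real.log A.det.re = ∑ i, Real.log (hA.1.eigenvalues i) := by
    rw [det_re_eq_prod A hA.1, Real.log_prod]
    exact fun i _ => (hev i).ne'
  have hle : ∀ i ∈ Finset.univ, Real.log (hA.1.eigenvalues i) ≤ hA.1.eigenvalues i - 1 :=
    fun i _ => Real.log_le_sub_one_of_pos (hev i)
  constructor
  · rw [htr, hld]
    have := Finset.sum_le_sum hle
    rw [Finset.sum_sub_distrib] at this
    simp only [Finset.sum_const, Finset.card_univ, Fintype.card_fin, nsmul_eq_mul, mul_one] at this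
    linarith
  · intro heq
    have hall : ∀ i, hA.1.eigenvalues i = 1 := by
      by_contra hcon
      push_neg at hcon
      obtain ⟨j, hj⟩ := hcon
      have hstrict : ∑ i, Real.log (hA.1.eigenvalues i) < ∑ i, (hA.1.eigenvalues i - 1) :=
        Finset.sum_lt_sum hle ⟨j, Finset.mem_univ j,
          Real.log_lt_sub_one_of_pos (hev j) hj⟩
      rw [Finset.sum_sub_distrib] at hstrict
      simp only [Finset.sum_const, Finset.card_univ, Fintype.card_fin, nsmul_eq_mul,
        mul_one] at hstrict
      rw [htr, hld] at heq
      linarith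
    have : (diagonal (RCLike.ofReal ∘ hA.1.eigenvalues) : Matrix (Fin n) (Fin n) ℂ) = 1 := by
      have : (RCLike.ofReal ∘ hA.1.eigenvalues : Fin n → ℂ) = fun _ => 1 := by
        funext i; simp [hall i]
      rw [this]
      exact diagonal_one
    rw [hA.1.spectral_theorem, this, Unitary.conjStarAlgAut_apply, mul_one]
    exact (Matrix.mem_unitaryGroup_iff).mp (hA.1.eigenvectorUnitary).2

lemma posDef_conj {S R : Matrix (Fin n) (Fin n) ℂ} (hS : S.PosDef) (hR : R.IsHermitian)
    (hRu : IsUnit R) : (R * S * R).PosDef := by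
  refine Matrix.PosDef.of_dotProduct_mulVec_pos ?_ (fun x hx => ?_)
  · have := (hS.posSemidef.mul_mul_conjTranspose_same R).1
    rwa [hR.eq] at this
  · have hy : R *ᵥ x ≠ 0 := by
      intro h
      exact hx ((Matrix.mulVec_injective_iff_isUnit.mpr hRu)
        (h.trans (Matrix.mulVec_zero R).symm))
    have hpos := hS.dotProduct_mulVec_pos hy
    have hstar : star x ᵥ* R = star (R *ᵥ x) := by
      rw [star_mulVec, hR.eq]
    calc (0:ℂ) < star (R *ᵥ x) ⬝ᵥ (S *ᵥ (R *ᵥ x)) := hpos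
      _ = star x ⬝ᵥ ((R * S * R) *ᵥ x) := by
          rw [← hstar, ← dotProduct_mulVec, mulVec_mulVec, mulVec_mulVec]

lemma det_real {S : Matrix (Fin n) (Fin n) ℂ} (hS : S.PosDef) :
    S.det = ((S.det.re : ℝ) : ℂ) ∧ 0 < S.det.re := by
  have := hS.det_pos
  rw [Complex.lt_def] at this
  obtain ⟨h1, h2⟩ := this
  simp only [Complex.zero_re, Complex.zero_im] at h1 h2
  exact ⟨Complex.ext rfl (by simp [← h2]), h1⟩

end LogDetAuxC

open LogDetAuxC Matrix MatrixOrder in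
/-- For Hermitian positive definite `M` of size `n`, `ln det M⁻¹` is the maximum of
`f(S) = -tr(S·M) + ln det S + n` over Hermitian positive semidefinite `S`
(with `f(S) = -∞` at singular `S`, where `ln det S = -∞`), and the maximum is
attained uniquely at `S = M⁻¹`. -/
theorem logdet_inv_isGreatest (n : ℕ) (M : Matrix (Fin n) (Fin n) ℂ) (hM : M.PosDef)
    (f : Matrix (Fin n) (Fin n) ℂ → EReal)
    (hf_pd : ∀ S : Matrix (Fin n) (Fin n) ℂ, S.PosDef →
      f S = ((-(S * M).trace.re + Real.log (S.det.re) + n : ℝ) : EReal))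
    (hf_sing : ∀ S : Matrix (Fin n) (Fin n) ℂ, ¬S.PosDef → f S = ⊥) :
    IsGreatest {y : EReal | ∃ S : Matrix (Fin n) (Fin n) ℂ, S.PosSemidef ∧ y = f S}
      ((Real.log ((M⁻¹).det.re) : ℝ) : EReal) ∧
    (∀ S : Matrix (Fin n) (Fin n) ℂ, S.PosSemidef →
      f S = ((Real.log ((M⁻¹).det.re) : ℝ) : EReal) → S = M⁻¹) := by
  classical
  set R := CFC.sqrt M with hRdef
  have hRherm : R.IsHermitian := (Matrix.nonneg_iff_posSemidef.mp (CFC.sqrt_nonneg M)).1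
  have hRR : R * R = M := CFC.sqrt_mul_sqrt_self M (Matrix.nonneg_iff_posSemidef.mpr hM.posSemidef)
  obtain ⟨hMdet_eq, hMdet_pos⟩ := det_real hM
  have hMdetU : IsUnit M.det := (Matrix.isUnit_iff_isUnit_det M).1 hM.isUnit
  have hRdet : R.det ≠ 0 := by
    intro h
    have : R.det * R.det = M.det := by rw [← det_mul, hRR]
    rw [h, mul_zero] at this
    exact hMdetU.ne_zero this.symm
  have hRu : IsUnit R := (Matrix.isUnit_iff_isUnit_det R).2 hRdet.isUnit
  -- value of target
  have hinvdet : (M⁻¹).det.re = (M.det.re)⁻¹ := by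
    rw [Matrix.det_nonsing_inv, Ring.inverse_eq_inv']
    conv_lhs => rw [hMdet_eq]
    rw [← Complex.ofReal_inv]
    exact Complex.ofReal_re _
  have hc : Real.log ((M⁻¹).det.re) = -Real.log M.det.re := by
    rw [hinvdet, Real.log_inv]
  -- main inequality for PD S
  have main : ∀ S : Matrix (Fin n) (Fin n) ℂ, S.PosDef →
      (-(S * M).trace.re + Real.log (S.det.re) + n ≤ Real.log ((M⁻¹).det.re) ∧
       (-(S * M).trace.re + Real.log (S.det.re) + n = Real.log ((M⁻¹).det.re) → S = M⁻¹)) := by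
    intro S hS
    have hA : (R * S * R).PosDef := posDef_conj hS hRherm hRu
    obtain ⟨hSdet_eq, hSdet_pos⟩ := det_real hS
    have htrA : (R * S * R).trace = (S * M).trace := by
      rw [trace_mul_cycle, hRR, trace_mul_comm]
    have hdetA : (R * S * R).det = S.det * M.det := by
      rw [det_mul, det_mul, mul_comm R.det S.det, mul_assoc, ← det_mul, hRR]
    have hdetAre : (R * S * R).det.re = S.det.re * M.det.re := by
      rw [hdetA, hSdet_eq, hMdet_eq, ← Complex.ofReal_mul]
      exact Complex.ofReal_re _
    have hlogA : Real.log ((R * S * R).det.re) = Real.log S.det.re + Real.log M.det.re := by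
      rw [hdetAre, Real.log_mul hSdet_pos.ne' hMdet_pos.ne']
    obtain ⟨hkey1, hkey2⟩ := key (R * S * R) hA
    rw [hlogA, htrA] at hkey1 hkey2
    constructor
    · rw [hc]; linarith
    · intro heq
      rw [hc] at heq
      have hA1 : R * S * R = 1 := hkey2 (by linarith)
      have h2 := congrArg (fun X => R⁻¹ * X * R⁻¹) hA1
      rw [← mul_assoc, ← mul_assoc, Matrix.nonsing_inv_mul R hRdet.isUnit, one_mul,
        mul_assoc S R R⁻¹, Matrix.mul_nonsing_inv R hRdet.isUnit, mul_one,
        mul_one] at h2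
      rw [h2, ← Matrix.mul_inv_rev, hRR]
  -- value at M⁻¹
  have hMinv : M⁻¹.PosDef := hM.inv
  have hfMinv : f M⁻¹ = ((Real.log ((M⁻¹).det.re) : ℝ) : EReal) := by
    rw [hf_pd M⁻¹ hMinv]
    congr 1
    have h1 : M⁻¹ * M = 1 := Matrix.nonsing_inv_mul M hMdetU
    rw [h1, trace_one]
    ring_nf
    simp
  refine ⟨⟨⟨M⁻¹, hMinv.posSemidef, hfMinv.symm⟩, ?_⟩, ?_⟩
  · rintro y ⟨S, hS, rfl⟩
    by_cases hSpd : S.PosDef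
    · rw [hf_pd S hSpd]
      exact EReal.coe_le_coe_iff.mpr (main S hSpd).1
    · rw [hf_sing S hSpd]; exact bot_le
  · intro S hS heq
    by_cases hSpd : S.PosDef
    · rw [hf_pd S hSpd] at heq
      exact (main S hSpd).2 (EReal.coe_eq_coe_iff.mp heq)
    · rw [hf_sing S hSpd] at heq
      exact absurd heq.symm (EReal.coe_ne_bot _)
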